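/- Let α > 0 and let ξ : [0,∞) → ℝ be measurable with u ↦ exp(αξ_u) locally integrable and τ := ∫_0^∞ exp(αξ_u) du < ∞. Define H(t) = inf{s ≥ 0 : ∫_0^s exp(αξ_u) du > t} and X_t = exp(ξ_{H(t)}) for 0 ≤ t < τ. Then for every s ∈ (0, τ): H(τ − s) = ∫_s^{τ} X_{τ−u}^{−α} du = ∫_{−log τ}^{−log s} (e^{v/α} X_{τ − e^{−v}})^{−α} dv. (This is the reversed-clock identity φ°_s = ∫_{−log τ°}^{−log s} |X̃°_v|^{−α} dv used to analyse windings into the origin.) -/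

import Mathlib

open MeasureTheory Filter Set Real
open scoped ENNReal

open scoped NNReal

open Topology in
private lemma key_clock
    (f : ℝ → ℝ) (hfm : Measurable f) (hfpos : ∀ x, 0 < f x)
    (hint : IntegrableOn f (Set.Ioi 0) volume)
    (τ : ℝ) (hτ : τ = ∫ u in Set.Ioi (0:ℝ), f u)
    (H : ℝ → ℝ)
    (hH : ∀ t : ℝ, H t = sInf {s : ℝ | 0 ≤ s ∧ t < ∫ u in Set.Ioc 0 s, f u})
    (t₀ : ℝ) (ht₀ : t₀ ∈ Set.Ioo 0 τ) :
    H t₀ = ∫ r in Set.Ioc 0 t₀, (f (H r))⁻¹ := by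
  set F : ℝ → ℝ := fun s => ∫ u in Set.Ioc 0 s, f u with hFdef
  have hfnn : ∀ x, 0 ≤ f x := fun x => (hfpos x).le
  have hFint : ∀ a b : ℝ, 0 ≤ a → IntegrableOn f (Set.Ioc a b) volume :=
    fun a b h0 => hint.mono_set (fun x hx => lt_of_le_of_lt h0 hx.1)
  have hFnonneg : ∀ s, 0 ≤ F s := fun s =>
    setIntegral_nonneg measurableSet_Ioc (fun x _ => hfnn x)
  have hFzero : ∀ s, s ≤ 0 → F s = 0 := by
    intro s hs
    simp only [hFdef]
    rw [Set.Ioc_eq_empty (by linarith), setIntegral_empty]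
  have hFmono : Monotone F := by
    intro x y hxy
    exact setIntegral_mono_set (hFint 0 y le_rfl)
      (Eventually.of_forall hfnn)
      (HasSubset.Subset.eventuallyLE (Set.Ioc_subset_Ioc_right hxy))
  have hFadd : ∀ a b : ℝ, 0 ≤ a → a ≤ b → F b = F a + ∫ u in Set.Ioc a b, f u := by
    intro a b h0 hab
    simp only [hFdef]
    rw [← setIntegral_union (Set.Ioc_disjoint_Ioc_of_le le_rfl) measurableSet_Ioc
      (hFint 0 a le_rfl) (hFint a b h0), Set.Ioc_union_Ioc_eq_Ioc h0 hab]
  have hIpos : ∀ a b : ℝ, 0 ≤ a → a < b → 0 < ∫ u in Set.Ioc a b, f u := by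
    intro a b h0 hab
    rw [setIntegral_pos_iff_support_of_nonneg_ae (Eventually.of_forall hfnn) (hFint a b h0)]
    have hsupp : Function.support f = Set.univ := by
      ext x; simp [Function.mem_support, (hfpos x).ne']
    rw [hsupp, Set.univ_inter, Real.volume_Ioc]
    simpa using hab
  have hFstrict : ∀ a b : ℝ, 0 ≤ a → a < b → F a < F b := by
    intro a b h0 hab
    have := hIpos a b h0 hab
    rw [hFadd a b h0 hab.le]; linarith
  have hFcont : ContinuousOn F (Set.Ici 0) := by
    intro x hx
    have hc : ContinuousOn F (Set.Icc 0 (x+1)) := by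
      apply intervalIntegral.continuousOn_primitive
      rw [integrableOn_Icc_iff_integrableOn_Ioc]
      exact hFint 0 (x+1) le_rfl
    have hmem : Set.Icc 0 (x+1) ∈ 𝓝[Set.Ici 0] x :=
      mem_nhdsWithin.2 ⟨Set.Iio (x+1), isOpen_Iio, by simp,
        fun y hy => ⟨hy.2, hy.1.le⟩⟩
    exact (hc x ⟨hx, by linarith⟩).mono_of_mem_nhdsWithin hmem
  -- nonemptiness of the defining sets
  have hSne : ∀ t, t < τ → {s : ℝ | 0 ≤ s ∧ t < F s}.Nonempty := by
    intro t ht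
    have hU : (⋃ n : ℕ, Set.Ioc (0:ℝ) n) = Set.Ioi 0 := by
      ext x
      simp only [Set.mem_iUnion, Set.mem_Ioc, Set.mem_Ioi]
      constructor
      · rintro ⟨n, h, _⟩; exact h
      · intro hx; obtain ⟨n, hn⟩ := exists_nat_ge x; exact ⟨n, hx, hn⟩
    have hten : Tendsto (fun n : ℕ => F n) atTop (𝓝 τ) := by
      have := tendsto_setIntegral_of_monotone (fun n : ℕ => measurableSet_Ioc)
        (fun n m hnm => Set.Ioc_subset_Ioc_right (by exact_mod_cast hnm)) (hU ▸ hint)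
      rw [hU] at this
      rwa [hτ]
    obtain ⟨n, hn⟩ := (hten.eventually (eventually_gt_nhds ht)).exists
    exact ⟨n, Nat.cast_nonneg n, hn⟩
  have hbdd : ∀ t : ℝ, BddBelow {s : ℝ | 0 ≤ s ∧ t < F s} := fun t =>
    ⟨0, fun s hs => hs.1⟩
  have hH0 : ∀ t, t < τ → 0 ≤ H t := fun t ht =>
    (hH t) ▸ le_csInf (hSne t ht) (fun s hs => hs.1)
  -- Lemma A : F (H t) = t for t ∈ (0, τ)
  have hFH : ∀ t, t ∈ Set.Ioo 0 τ → F (H t) = t := by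
    intro t ht
    set h := H t with hh
    rw [hH t] at hh
    have hh0 : 0 ≤ h := hH0 t ht.2
    have h1 : F h ≤ t := by
      by_contra hc
      push_neg at hc
      have hhpos : 0 < h := by
        rcases hh0.lt_or_eq with h' | h'
        · exact h'
        · exfalso
          have := hFzero 0 le_rfl
          rw [← h', this] at hc; exact absurd hc (not_lt.2 ht.1.le)
      have hcw : ContinuousWithinAt F (Set.Ico 0 h) h :=
        (hFcont h hh0).mono Ico_subset_Ici_self
      have hev : ∀ᶠ x in 𝓝[Set.Ico 0 h] h, t < F x := hcw.eventually_const_lt hc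
      have hne : (𝓝[Set.Ico 0 h] h).NeBot := by
        rw [← mem_closure_iff_nhdsWithin_neBot, closure_Ico hhpos.ne]
        exact ⟨hh0, le_rfl⟩
      obtain ⟨x, hxt, hx⟩ := (hev.and (eventually_mem_nhdsWithin)).exists
      have := csInf_le (hbdd t) (⟨hx.1, hxt⟩ : x ∈ {s : ℝ | 0 ≤ s ∧ t < F s})
      rw [← hh] at this
      exact absurd this (not_le.2 hx.2)
    have h2 : t ≤ F h := by
      have hev : ∀ᶠ x in 𝓝[>] h, t ≤ F x := by
        filter_upwards [self_mem_nhdsWithin] with x hx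
        obtain ⟨s, hsS, hs⟩ := exists_lt_of_csInf_lt (hSne t ht.2) (hh ▸ hx)
        exact hsS.2.le.trans (hFmono hs.le)
      have hcw : ContinuousWithinAt F (Set.Ioi h) h :=
        (hFcont h hh0).mono (fun x hx => le_of_lt (lt_of_le_of_lt hh0 hx))
      exact ge_of_tendsto hcw hev
    linarith
  -- the key order equivalence
  have hiff : ∀ r, r ∈ Set.Ioo 0 τ → ∀ b : ℝ, H r ≤ b ↔ r ≤ F b := by
    intro r hr b
    constructor
    · intro hb
      calc r = F (H r) := (hFH r hr).symm
        _ ≤ F b := hFmono hb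
    · intro hb
      have hb0 : 0 ≤ b := by
        by_contra hc
        push_neg at hc
        rw [hFzero b hc.le] at hb
        exact absurd hb (not_le.2 hr.1)
      by_contra hc
      push_neg at hc
      obtain ⟨s, hs1, hs2⟩ := exists_between hc
      have hsS : s ∈ {s : ℝ | 0 ≤ s ∧ r < F s} :=
        ⟨hb0.trans hs1.le, lt_of_le_of_lt hb (hFstrict b s hb0 hs1)⟩
      have := csInf_le (hbdd r) hsS
      rw [← hH r] at this
      exact absurd this (not_le.2 hs2)
  -- monotone extension G
  have hHmono : ∀ r r' : ℝ, r ≤ r' → r' ≤ t₀ → H r ≤ H r' := by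
    intro r r' hrr hr'
    rw [hH r, hH r']
    exact csInf_le_csInf (hbdd r) (hSne r' (lt_of_le_of_lt hr' ht₀.2))
      (fun s hs => ⟨hs.1, lt_of_le_of_lt hrr hs.2⟩)
  set G : ℝ → ℝ := fun r => H (min r t₀) with hGdef
  have hGmono : Monotone G := fun r r' h =>
    hHmono _ _ (min_le_min_right t₀ h) (min_le_right r' t₀)
  have hGmeas : Measurable G := hGmono.measurable
  set h₀ := H t₀ with hh₀
  have hFh₀ : F h₀ = t₀ := hFH t₀ ht₀
  have hh₀0 : 0 ≤ h₀ := hH0 t₀ ht₀.2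
  set μt := volume.restrict (Set.Ioc (0:ℝ) t₀) with hμt
  set w : ℝ → ℝ≥0 := fun s => (f s).toNNReal with hw
  have hwmeas : Measurable w := hfm.real_toNNReal
  set ν := (volume.restrict (Set.Ioc (0:ℝ) h₀)).withDensity (fun s => (w s : ℝ≥0∞)) with hν
  have hmap : Measure.map G μt = ν := by
    haveI : IsFiniteMeasure μt :=
      ⟨by rw [hμt, Measure.restrict_apply_univ]; exact measure_Ioc_lt_top⟩
    haveI : IsFiniteMeasure (Measure.map G μt) := Measure.isFiniteMeasure_map μt G
    refine Measure.ext_of_Ioc _ _ (fun a b hab => ?_)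
    rw [Measure.map_apply hGmeas measurableSet_Ioc, hμt,
      Measure.restrict_apply (hGmeas measurableSet_Ioc)]
    have hpre : G ⁻¹' (Set.Ioc a b) ∩ Set.Ioc 0 t₀
        = Set.Ioc (F a) (F b) ∩ Set.Ioc 0 t₀ := by
      ext r
      simp only [Set.mem_inter_iff, Set.mem_preimage, Set.mem_Ioc]
      constructor
      · rintro ⟨⟨ha, hb⟩, hr⟩
        have hrt : r ∈ Set.Ioo 0 τ := ⟨hr.1, lt_of_le_of_lt hr.2 ht₀.2⟩
        have hGr : G r = H r := by rw [hGdef]; simp only [min_eq_left hr.2]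
        rw [hGr] at ha hb
        refine ⟨⟨?_, (hiff r hrt b).1 hb⟩, hr⟩
        by_contra hc
        push_neg at hc
        exact absurd ((hiff r hrt a).2 hc) (not_le.2 ha)
      · rintro ⟨⟨ha, hb⟩, hr⟩
        have hrt : r ∈ Set.Ioo 0 τ := ⟨hr.1, lt_of_le_of_lt hr.2 ht₀.2⟩
        have hGr : G r = H r := by rw [hGdef]; simp only [min_eq_left hr.2]
        rw [hGr]
        refine ⟨⟨?_, (hiff r hrt b).2 hb⟩, hr⟩
        by_contra hc
        push_neg at hc
        exact absurd ((hiff r hrt a).1 hc) (not_le.2 ha)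
    rw [hpre, Set.Ioc_inter_Ioc, Real.volume_Ioc]
    rw [hν, withDensity_apply _ measurableSet_Ioc,
      Measure.restrict_restrict measurableSet_Ioc, Set.Ioc_inter_Ioc]
    have hcoe : ∫⁻ x in Set.Ioc (max a 0) (min b h₀), ((w x : ℝ≥0∞))
        = ∫⁻ x in Set.Ioc (max a 0) (min b h₀), ENNReal.ofReal (f x) := rfl
    rw [hcoe, ← ofReal_integral_eq_lintegral_ofReal
      (hFint (max a 0) (min b h₀) (le_max_right a 0))
      (Eventually.of_forall hfnn)]
    have hFa : F (max a 0) = F a := by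
      rcases le_total a 0 with h' | h'
      · rw [max_eq_right h', hFzero a h', hFzero 0 le_rfl]
      · rw [max_eq_left h']
    have hFb : F (min b h₀) = min (F b) t₀ := by
      rw [hFmono.map_min, hFh₀]
    have hmaxF : max (F a) 0 = F a := max_eq_left (hFnonneg a)
    rw [hmaxF]
    rcases le_total (max a 0) (min b h₀) with hle | hlt
    · have := hFadd (max a 0) (min b h₀) (le_max_right a 0) hle
      rw [hFa, hFb] at this
      congr 1
      linarith
    · rw [Set.Ioc_eq_empty (not_lt.2 hlt), setIntegral_empty]
      rw [ENNReal.ofReal_zero, ENNReal.ofReal_eq_zero]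
      have : F (min b h₀) ≤ F (max a 0) := hFmono hlt
      rw [hFa, hFb] at this
      linarith
  -- final computation
  have hcong : ∫ r in Set.Ioc 0 t₀, (f (H r))⁻¹ = ∫ r in Set.Ioc 0 t₀, (f (G r))⁻¹ := by
    apply setIntegral_congr_fun measurableSet_Ioc
    intro r hr
    rw [hGdef]; simp only [min_eq_left hr.2]
  rw [hcong]
  have hmi : ∫ r in Set.Ioc 0 t₀, (f (G r))⁻¹ = ∫ y, (f y)⁻¹ ∂(Measure.map G μt) := by
    rw [integral_map hGmeas.aemeasurable (f := fun y => (f y)⁻¹) (hfm.inv.aestronglyMeasurable)]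
  rw [hmi, hmap, hν, integral_withDensity_eq_integral_smul hwmeas]
  have : ∀ y : ℝ, w y • (f y)⁻¹ = ((1 : ℝ → ℝ) y) := by
    intro y
    simp only [NNReal.smul_def, smul_eq_mul, Pi.one_apply]
    rw [hw]
    simp only [Real.coe_toNNReal _ (hfnn y)]
    exact mul_inv_cancel₀ (hfpos y).ne'
  rw [integral_congr_ae (Eventually.of_forall this)]
  simp only [Pi.one_apply]
  rw [setIntegral_const, measureReal_def, Real.volume_Ioc, smul_eq_mul, mul_one,
    ENNReal.toReal_ofReal (by linarith : (0:ℝ) ≤ h₀ - 0)]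
  ring

/-- Let `α > 0` and `ξ : [0,∞) → ℝ` be measurable with
`u ↦ exp(αξ_u)` locally integrable and `τ := ∫_0^∞ exp(αξ_u) du < ∞`. With
`H(t) = inf{s ≥ 0 : ∫_0^s exp(αξ_u) du > t}` and `X_t = exp(ξ_{H(t)})`, for every
`s ∈ (0, τ)`:
`H(τ − s) = ∫_s^τ X_{τ−u}^{−α} du = ∫_{−log τ}^{−log s} (e^{v/α} X_{τ−e^{−v}})^{−α} dv`.
(The reversed-clock identity used to analyse windings into the origin.) -/
theorem reversed_clock_identity
    (α : ℝ) (hα : 0 < α) (ξ : ℝ → ℝ) (hmeas : Measurable ξ)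
    (hint : IntegrableOn (fun u => Real.exp (α * ξ u)) (Set.Ioi 0) volume)
    (τ : ℝ) (hτ : τ = ∫ u in Set.Ioi (0 : ℝ), Real.exp (α * ξ u))
    (H : ℝ → ℝ)
    (hH : ∀ t : ℝ, H t
      = sInf {s : ℝ | 0 ≤ s ∧ t < ∫ u in Set.Ioc 0 s, Real.exp (α * ξ u)})
    (X : ℝ → ℝ) (hX : ∀ t : ℝ, X t = Real.exp (ξ (H t))) :
    ∀ s : ℝ, s ∈ Set.Ioo 0 τ →
      H (τ - s) = (∫ u in Set.Ioc s τ, (X (τ - u)) ^ (-α)) ∧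
      H (τ - s) = ∫ v in Set.Ioc (-Real.log τ) (-Real.log s),
          (Real.exp (v / α) * X (τ - Real.exp (-v))) ^ (-α) := by
  intro s hs
  have hτpos : 0 < τ := lt_trans hs.1 hs.2
  set t₀ : ℝ := τ - s with ht₀def
  have ht₀ : t₀ ∈ Set.Ioo 0 τ := ⟨by simp only [ht₀def]; linarith [hs.2], by simp only [ht₀def]; linarith [hs.1]⟩
  have hkey := key_clock (fun u => Real.exp (α * ξ u))
    (Real.measurable_exp.comp (hmeas.const_mul α)) (fun x => Real.exp_pos _)
    hint τ hτ H hH t₀ ht₀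
  have hXrw : ∀ r : ℝ, (X r) ^ (-α) = (Real.exp (α * ξ (H r)))⁻¹ := by
    intro r
    rw [hX r, Real.rpow_def_of_pos (Real.exp_pos _), Real.log_exp, ← Real.exp_neg]
    congr 1; ring
  have hpart1 : (∫ u in Set.Ioc s τ, (X (τ - u)) ^ (-α))
      = ∫ r in Set.Ioc 0 t₀, (Real.exp (α * ξ (H r)))⁻¹ := by
    rw [← intervalIntegral.integral_of_le hs.2.le]
    have : (∫ u in s..τ, (X (τ - u)) ^ (-α))
        = ∫ u in s..τ, (fun r => (Real.exp (α * ξ (H r)))⁻¹) (τ - u) := by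
      apply intervalIntegral.integral_congr
      intro u _
      exact hXrw (τ - u)
    rw [this, intervalIntegral.integral_comp_sub_left
      (fun r => (Real.exp (α * ξ (H r)))⁻¹) τ, sub_self,
      intervalIntegral.integral_of_le ht₀.1.le]
  constructor
  · rw [hpart1]; exact hkey
  · -- second identity
    have hXpos : ∀ t, 0 < X t := fun t => (hX t) ▸ Real.exp_pos _
    set g : ℝ → ℝ := fun u => (X (τ - u)) ^ (-α) with hgdef
    have himg : (fun v => Real.exp (-v)) '' (Set.Ioc (-Real.log τ) (-Real.log s))
        = Set.Ico s τ := by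
      ext x
      simp only [Set.mem_image, Set.mem_Ioc, Set.mem_Ico]
      constructor
      · rintro ⟨v, ⟨hv1, hv2⟩, rfl⟩
        constructor
        · calc s = Real.exp (Real.log s) := (Real.exp_log hs.1).symm
            _ ≤ Real.exp (-v) := Real.exp_le_exp.2 (by linarith)
        · calc Real.exp (-v) < Real.exp (Real.log τ) := Real.exp_lt_exp.2 (by linarith)
            _ = τ := Real.exp_log hτpos
      · rintro ⟨h1, h2⟩
        have hx0 : 0 < x := lt_of_lt_of_le hs.1 h1
        refine ⟨-Real.log x, ⟨?_, ?_⟩, by rw [neg_neg, Real.exp_log hx0]⟩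
        · have := Real.log_lt_log hx0 h2; linarith
        · have := (Real.log_le_log_iff hs.1 hx0).2 h1; linarith
    have hder : ∀ v : ℝ, v ∈ Set.Ioc (-Real.log τ) (-Real.log s) →
        HasDerivWithinAt (fun v => Real.exp (-v)) (-Real.exp (-v)) (Set.Ioc (-Real.log τ) (-Real.log s)) v := by
      intro v _
      have : HasDerivAt (fun v : ℝ => Real.exp (-v)) (-Real.exp (-v)) v := by
        simpa [Function.comp_def] using (Real.hasDerivAt_exp (-v)).comp v ((hasDerivAt_id v).neg)
      exact this.hasDerivWithinAt
    have hinj : Set.InjOn (fun v => Real.exp (-v)) (Set.Ioc (-Real.log τ) (-Real.log s)) :=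
      (Real.exp_injective.comp neg_injective).injOn
    have hcv := integral_image_eq_integral_abs_deriv_smul measurableSet_Ioc hder hinj g
    rw [himg] at hcv
    have hIcoIoc : (∫ x in Set.Ico s τ, g x) = ∫ x in Set.Ioc s τ, g x := by
      rw [integral_Ico_eq_integral_Ioo, integral_Ioc_eq_integral_Ioo]
    have hrhs : (∫ v in Set.Ioc (-Real.log τ) (-Real.log s),
          (Real.exp (v / α) * X (τ - Real.exp (-v))) ^ (-α))
        = ∫ v in Set.Ioc (-Real.log τ) (-Real.log s),
          |(-Real.exp (-v))| • g (Real.exp (-v)) := by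
      apply setIntegral_congr_fun measurableSet_Ioc
      intro v _
      simp only [hgdef, smul_eq_mul, abs_neg, abs_of_pos (Real.exp_pos (-v))]
      rw [Real.mul_rpow (Real.exp_pos _).le (hXpos _).le, ← Real.exp_mul,
        show v / α * (-α) = -v from by field_simp]
    rw [hrhs, ← hcv, hIcoIoc, hpart1]
    exact hkey
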